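/- The Gauss map A(x) = 1/x − ⌊1/x⌋ on (0,1) preserves the probability measure with density ρ(x) = 1/((1+x) log 2) with respect to Lebesgue measure. -/

import Mathlib

open MeasureTheory Set Filter

-- key integral lemma
lemma key_lintegral (u v : ℝ) (hu : 0 ≤ u) (huv : u ≤ v) :
    ∫⁻ x in Set.Ioc u v, ENNReal.ofReal (1 / ((1 + x) * Real.log 2)) =
      ENNReal.ofReal ((Real.log (1+v) - Real.log (1+u)) / Real.log 2) := by
  have hlog2 : (0:ℝ) < Real.log 2 := Real.log_pos one_lt_two
  have hcont : ContinuousOn (fun x : ℝ => 1 / ((1 + x) * Real.log 2)) (Set.Icc u v) := by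
    apply ContinuousOn.div continuousOn_const
    · exact ((continuousOn_const.add continuousOn_id).mul continuousOn_const)
    · intro x hx
      have : (0:ℝ) < 1 + x := by linarith [hx.1]
      positivity
  have hint : IntegrableOn (fun x : ℝ => 1 / ((1 + x) * Real.log 2)) (Set.Ioc u v) := by
    exact (hcont.integrableOn_Icc).mono_set Set.Ioc_subset_Icc_self
  rw [← ofReal_integral_eq_lintegral_ofReal hint ?_]
  · congr 1
    rw [← intervalIntegral.integral_of_le huv]
    have : ∀ x : ℝ, 1 / ((1 + x) * Real.log 2) = (Real.log 2)⁻¹ * (1 + x)⁻¹ := by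
      intro x; field_simp
    simp_rw [this]
    rw [intervalIntegral.integral_const_mul]
    rw [intervalIntegral.integral_comp_add_left (fun x => x⁻¹) 1]
    rw [integral_inv_of_pos (by linarith) (by linarith)]
    rw [Real.log_div (by linarith) (by linarith)]
    ring
  · filter_upwards [ae_restrict_mem measurableSet_Ioc] with x hx
    have : (0:ℝ) < 1 + x := by linarith [hx.1]
    positivity

lemma tsum_tele (a : ℝ) (ha : 0 ≤ a) :
    ∑' n : ℕ, ENNReal.ofReal ((Real.log (1+((n:ℝ)+1)⁻¹) - Real.log (1+((n:ℝ)+1+a)⁻¹)) / Real.log 2)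
      = ENNReal.ofReal (Real.log (1+a) / Real.log 2) := by
  have hlog2 : (0:ℝ) < Real.log 2 := Real.log_pos one_lt_two
  set f : ℕ → ℝ := fun n => (Real.log ((n:ℝ)+1+a) - Real.log ((n:ℝ)+1)) / Real.log 2 with hf
  set c : ℕ → ℝ := fun n =>
    (Real.log (1+((n:ℝ)+1)⁻¹) - Real.log (1+((n:ℝ)+1+a)⁻¹)) / Real.log 2 with hc
  have hpos : ∀ n : ℕ, (0:ℝ) < (n:ℝ)+1 := fun n => by positivity
  have hposa : ∀ n : ℕ, (0:ℝ) < (n:ℝ)+1+a := fun n => by positivity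
  have hcf : ∀ n : ℕ, c n = f n - f (n+1) := by
    intro n
    have h1 : (1:ℝ) + ((n:ℝ)+1)⁻¹ = ((n:ℝ)+2) / ((n:ℝ)+1) := by
      field_simp; ring
    have h2 : (1:ℝ) + ((n:ℝ)+1+a)⁻¹ = ((n:ℝ)+2+a) / ((n:ℝ)+1+a) := by
      field_simp; ring
    simp only [hc, hf, h1, h2, Real.log_div (by positivity : ((n:ℝ)+2) ≠ 0) (hpos n).ne',
      Real.log_div (by positivity : ((n:ℝ)+2+a) ≠ 0) (hposa n).ne']
    push_cast
    ring
  have hcnn : ∀ n : ℕ, 0 ≤ c n := by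
    intro n
    apply div_nonneg _ hlog2.le
    have h1 : (1:ℝ) + ((n:ℝ)+1+a)⁻¹ ≤ 1 + ((n:ℝ)+1)⁻¹ := by
      have := inv_anti₀ (hpos n) (by linarith : (n:ℝ)+1 ≤ (n:ℝ)+1+a)
      linarith
    have h2 : (0:ℝ) < 1 + ((n:ℝ)+1+a)⁻¹ := by positivity
    linarith [(Real.log_le_log_iff h2 (by positivity)).mpr h1]
  -- partial sums
  have hps : ∀ N : ℕ, ∑ i ∈ Finset.range N, ENNReal.ofReal (c i)
      = ENNReal.ofReal (f 0 - f N) := by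
    intro N
    rw [← ENNReal.ofReal_sum_of_nonneg (fun i _ => hcnn i)]
    congr 1
    calc ∑ i ∈ Finset.range N, c i = ∑ i ∈ Finset.range N, (f i - f (i+1)) := by
          exact Finset.sum_congr rfl fun i _ => hcf i
      _ = f 0 - f N := Finset.sum_range_sub' f N
  -- f N → 0
  have hf0 : Tendsto f atTop (nhds 0) := by
    have hrw : ∀ n : ℕ, f n = Real.log (1 + a/((n:ℝ)+1)) / Real.log 2 := by
      intro n
      have hx : (0:ℝ) < 1 + a/((n:ℝ)+1) := by positivity
      have hlg : Real.log ((n:ℝ)+1+a) = Real.log ((n:ℝ)+1) + Real.log (1 + a/((n:ℝ)+1)) := by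
        rw [← Real.log_mul (hpos n).ne' hx.ne']
        congr 1
        field_simp
      simp only [hf, hlg]
      ring
    rw [show f = fun n : ℕ => Real.log (1 + a/((n:ℝ)+1)) / Real.log 2 from funext hrw]
    have h1 : Tendsto (fun n : ℕ => a/((n:ℝ)+1)) atTop (nhds 0) := by
      apply Tendsto.div_atTop tendsto_const_nhds
      exact tendsto_atTop_add_const_right _ _ tendsto_natCast_atTop_atTop
    have h2 : Tendsto (fun n : ℕ => Real.log (1 + a/((n:ℝ)+1))) atTop (nhds 0) := by
      have := (Real.continuousAt_log (by norm_num : (1:ℝ) ≠ 0)).tendsto.comp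
        (by simpa using (tendsto_const_nhds.add h1) :
          Tendsto (fun n : ℕ => 1 + a/((n:ℝ)+1)) atTop (nhds 1))
      simpa [Function.comp_def] using this
    simpa using h2.div_const (Real.log 2)
  have hlim : Tendsto (fun N => ∑ i ∈ Finset.range N, ENNReal.ofReal (c i)) atTop
      (nhds (ENNReal.ofReal (f 0))) := by
    simp_rw [hps]
    have : Tendsto (fun N : ℕ => f 0 - f N) atTop (nhds (f 0)) := by
      simpa using tendsto_const_nhds.sub hf0
    exact (ENNReal.continuous_ofReal.tendsto _).comp this
  have := tendsto_nhds_unique (ENNReal.tendsto_nat_tsum (fun n => ENNReal.ofReal (c n))) hlim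
  rw [show (∑' n : ℕ, ENNReal.ofReal ((Real.log (1+((n:ℝ)+1)⁻¹) -
      Real.log (1+((n:ℝ)+1+a)⁻¹)) / Real.log 2)) = ∑' n, ENNReal.ofReal (c n) from rfl, this]
  congr 1
  norm_num [hf]

theorem stmt13 :
    MeasurePreserving (fun x : ℝ => Int.fract x⁻¹)
      ((volume.restrict (Set.Ioo (0 : ℝ) 1)).withDensity
        (fun x => ENNReal.ofReal (1 / ((1 + x) * Real.log 2))))
      ((volume.restrict (Set.Ioo (0 : ℝ) 1)).withDensity
        (fun x => ENNReal.ofReal (1 / ((1 + x) * Real.log 2)))) ∧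
    IsProbabilityMeasure
      ((volume.restrict (Set.Ioo (0 : ℝ) 1)).withDensity
        (fun x => ENNReal.ofReal (1 / ((1 + x) * Real.log 2)))) := by
  have hlog2 : (0:ℝ) < Real.log 2 := Real.log_pos one_lt_two
  set ρ : ℝ → ENNReal := fun x => ENNReal.ofReal (1 / ((1 + x) * Real.log 2)) with hρ
  set μ : Measure ℝ := (volume.restrict (Set.Ioo (0 : ℝ) 1)).withDensity ρ with hμ
  have happ : ∀ s : Set ℝ, MeasurableSet s →
      μ s = ∫⁻ x in s ∩ Set.Ioo 0 1, ρ x ∂volume := by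
    intro s hs
    rw [hμ, withDensity_apply _ hs, Measure.restrict_restrict hs]
  have hT : Measurable (fun x : ℝ => Int.fract x⁻¹) :=
    measurable_fract.comp measurable_inv
  have hmass : μ Set.univ = 1 := by
    rw [happ _ MeasurableSet.univ, Set.univ_inter,
      setLIntegral_congr (Ioo_ae_eq_Ioc (μ := volume) (a := (0:ℝ)) (b := 1)),
      key_lintegral 0 1 le_rfl zero_le_one]
    norm_num [Real.log_one, div_self hlog2.ne', ENNReal.ofReal_one]
  have hprob : IsProbabilityMeasure μ := ⟨hmass⟩
  refine ⟨⟨hT, ?_⟩, hprob⟩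
  haveI := hprob
  haveI : IsProbabilityMeasure (μ.map (fun x : ℝ => Int.fract x⁻¹)) :=
    Measure.isProbabilityMeasure_map hT.aemeasurable
  apply Measure.ext_of_Iic
  intro a
  rw [Measure.map_apply hT measurableSet_Iic,
    happ _ (hT measurableSet_Iic), happ _ measurableSet_Iic]
  rcases lt_or_ge a 0 with ha | ha0
  · have h1 : (fun x : ℝ => Int.fract x⁻¹) ⁻¹' Set.Iic a ∩ Set.Ioo 0 1 = ∅ := by
      ext x
      simp only [Set.mem_inter_iff, Set.mem_preimage, Set.mem_Iic, Set.mem_Ioo,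
        Set.mem_empty_iff_false, iff_false, not_and]
      intro hx
      intro h
      linarith [Int.fract_nonneg (x⁻¹)]
    have h2 : Set.Iic a ∩ Set.Ioo 0 1 = ∅ := by
      rw [Set.eq_empty_iff_forall_notMem]
      rintro x ⟨hx, hx0, _⟩
      simp only [Set.mem_Iic] at hx
      exact absurd (lt_of_lt_of_le hx0 hx) (not_lt.mpr ha.le)
    rw [h1, h2]
  rcases le_or_gt 1 a with ha1 | ha1
  · have h1 : (fun x : ℝ => Int.fract x⁻¹) ⁻¹' Set.Iic a ∩ Set.Ioo 0 1 = Set.Ioo 0 1 := by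
      ext x
      simp only [Set.mem_inter_iff, Set.mem_preimage, Set.mem_Iic, Set.mem_Ioo,
        and_iff_right_iff_imp]
      intro _
      linarith [Int.fract_lt_one (x⁻¹)]
    have h2 : Set.Iic a ∩ Set.Ioo 0 1 = Set.Ioo 0 1 := by
      ext x
      simp only [Set.mem_inter_iff, Set.mem_Iic, Set.mem_Ioo, and_iff_right_iff_imp]
      intro hx
      linarith [hx.2]
    rw [h1, h2]
  -- main case : 0 ≤ a < 1
  set E : ℕ → Set ℝ := fun n => Set.Ioo 0 1 ∩ Set.Icc (((n:ℝ)+1+a)⁻¹) (((n:ℝ)+1)⁻¹) with hE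
  have hnpos : ∀ n : ℕ, (0:ℝ) < (n:ℝ)+1 := fun n => by positivity
  have hnapos : ∀ n : ℕ, (0:ℝ) < (n:ℝ)+1+a := fun n => by positivity
  have hupos : ∀ n : ℕ, (0:ℝ) < ((n:ℝ)+1+a)⁻¹ := fun n => by positivity
  have hvle : ∀ n : ℕ, ((n:ℝ)+1)⁻¹ ≤ 1 := by
    intro n
    rw [inv_le_one_iff₀]
    right; linarith [hnpos n]
  have huv : ∀ n : ℕ, ((n:ℝ)+1+a)⁻¹ ≤ ((n:ℝ)+1)⁻¹ := by
    intro n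
    apply inv_anti₀ (hnpos n)
    linarith
  have hset : (fun x : ℝ => Int.fract x⁻¹) ⁻¹' Set.Iic a ∩ Set.Ioo 0 1 = ⋃ n, E n := by
    ext x
    simp only [Set.mem_inter_iff, Set.mem_preimage, Set.mem_Iic, Set.mem_Ioo,
      Set.mem_iUnion, hE, Set.mem_Icc]
    constructor
    · rintro ⟨hfr, hx0, hx1⟩
      have hxinv : 1 < x⁻¹ := by
        rw [show (1:ℝ) = 1⁻¹ by norm_num]
        exact inv_strictAnti₀ hx0 hx1
      set k : ℤ := ⌊x⁻¹⌋ with hk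
      have hk1 : 1 ≤ k := Int.le_floor.mpr (by exact_mod_cast hxinv.le)
      have hkle : (k:ℝ) ≤ x⁻¹ := Int.floor_le _
      have hfr' : x⁻¹ - (k:ℝ) ≤ a := by
        rw [← Int.self_sub_floor] at hfr
        exact hfr
      refine ⟨(k-1).toNat, ?_⟩
      have hcast : (((k-1).toNat : ℝ)) = (k:ℝ) - 1 := by
        have h := Int.toNat_of_nonneg (show (0:ℤ) ≤ k - 1 by omega)
        have h2 : (((k-1).toNat : ℤ) : ℝ) = ((k - 1 : ℤ) : ℝ) := by rw [h]
        push_cast at h2 ⊢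
        linarith
      rw [hcast]
      have hkpos : (0:ℝ) < (k:ℝ) := by exact_mod_cast hk1
      refine ⟨⟨hx0, hx1⟩, ?_, ?_⟩
      · have hle : x⁻¹ ≤ (k:ℝ) - 1 + 1 + a := by linarith
        have := inv_anti₀ (inv_pos.mpr hx0) hle
        rwa [inv_inv] at this
      · have hle : (k:ℝ) - 1 + 1 ≤ x⁻¹ := by linarith
        have := inv_anti₀ (by linarith : (0:ℝ) < (k:ℝ) - 1 + 1) hle
        rwa [inv_inv] at this
    · rintro ⟨n, ⟨hx0, hx1⟩, hu, hv⟩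
      refine ⟨?_, hx0, hx1⟩
      have hinvu : x⁻¹ ≤ (n:ℝ)+1+a := by
        have := inv_anti₀ (hupos n) hu
        rwa [inv_inv] at this
      have hinvv : (n:ℝ)+1 ≤ x⁻¹ := by
        have := inv_anti₀ hx0 hv
        rwa [inv_inv] at this
      have hfl : ⌊x⁻¹⌋ = (n:ℤ) + 1 := by
        rw [Int.floor_eq_iff]
        constructor
        · push_cast; linarith
        · push_cast; linarith
      rw [← Int.self_sub_floor, hfl]
      push_cast
      linarith
  have hEmeas : ∀ n, MeasurableSet (E n) := fun n =>
    measurableSet_Ioo.inter measurableSet_Icc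
  have hdisj : Pairwise (Function.onFun Disjoint E) := by
    have key2 : ∀ m n : ℕ, m < n → Disjoint (E m) (E n) := by
      intro m n h
      rw [Set.disjoint_left]
      rintro x ⟨_, hmx⟩ ⟨_, hnx⟩
      have h1 : x ≤ ((n:ℝ)+1)⁻¹ := hnx.2
      have h2 : ((n:ℝ)+1)⁻¹ ≤ ((m:ℝ)+2)⁻¹ := by
        apply inv_anti₀ (by positivity)
        have : (m:ℝ) + 1 ≤ (n:ℝ) := by exact_mod_cast h
        linarith
      have h3 : ((m:ℝ)+2)⁻¹ < ((m:ℝ)+1+a)⁻¹ := by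
        apply inv_strictAnti₀ (hnapos m)
        linarith
      have h4 : ((m:ℝ)+1+a)⁻¹ ≤ x := hmx.1
      linarith
    intro m n hmn
    rcases hmn.lt_or_gt with h | h
    · exact key2 _ _ h
    · exact (key2 _ _ h).symm
  have hterm : ∀ n : ℕ, ∫⁻ x in E n, ρ x ∂volume =
      ENNReal.ofReal ((Real.log (1+((n:ℝ)+1)⁻¹) - Real.log (1+((n:ℝ)+1+a)⁻¹)) / Real.log 2) := by
    intro n
    have h1 : ∫⁻ x in Set.Ioo (((n:ℝ)+1+a)⁻¹) (((n:ℝ)+1)⁻¹), ρ x ∂volume =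
        ∫⁻ x in Set.Ioc (((n:ℝ)+1+a)⁻¹) (((n:ℝ)+1)⁻¹), ρ x ∂volume :=
      setLIntegral_congr Ioo_ae_eq_Ioc
    have h2 : ∫⁻ x in Set.Icc (((n:ℝ)+1+a)⁻¹) (((n:ℝ)+1)⁻¹), ρ x ∂volume =
        ∫⁻ x in Set.Ioc (((n:ℝ)+1+a)⁻¹) (((n:ℝ)+1)⁻¹), ρ x ∂volume :=
      setLIntegral_congr (Ioo_ae_eq_Icc.symm.trans Ioo_ae_eq_Ioc)
    have hval := key_lintegral (((n:ℝ)+1+a)⁻¹) (((n:ℝ)+1)⁻¹) (hupos n).le (huv n)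
    have hIoosub : Set.Ioo (((n:ℝ)+1+a)⁻¹) (((n:ℝ)+1)⁻¹) ⊆ E n := by
      intro x hx
      exact ⟨⟨lt_trans (hupos n) hx.1, lt_of_lt_of_le hx.2 (hvle n)⟩, hx.1.le, hx.2.le⟩
    apply le_antisymm
    · exact le_trans (lintegral_mono_set Set.inter_subset_right) (le_of_eq (h2.trans hval))
    · exact le_trans (le_of_eq ((h1.trans hval).symm)) (lintegral_mono_set hIoosub)
  have hIic : Set.Iic a ∩ Set.Ioo 0 1 = Set.Ioc 0 a := by
    ext x
    simp only [Set.mem_inter_iff, Set.mem_Iic, Set.mem_Ioo, Set.mem_Ioc]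
    constructor
    · rintro ⟨hxa, hx0, _⟩; exact ⟨hx0, hxa⟩
    · rintro ⟨hx0, hxa⟩; exact ⟨hxa, hx0, by linarith⟩
  rw [hset, lintegral_iUnion hEmeas hdisj, tsum_congr hterm, tsum_tele a ha0, hIic,
    key_lintegral 0 a le_rfl ha0]
  norm_num
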